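/- Let Γ ⊆ ℝⁿ be an open set and let G : ℝⁿ → ℝ be locally Lipschitz on an open set containing Γ. Let S be the set of points where G is differentiable. Suppose there exist constants c > 0, α > 0, η > 0 such that ‖∇G(u) − ∇G(v)‖ ≤ c‖u − v‖^α for all u, v ∈ S ∩ Γ with ‖u − v‖ ≤ η. Then G is differentiable at every point of Γ. -/

import Mathlib

open MeasureTheory Set Filter Topology intervalIntegral

lemma ftc_aux {φ g : ℝ → ℝ} {K : NNReal} (hφ : LipschitzWith K φ) {M C' : ℝ} (hC' : 0 ≤ C')
    (hae : ∀ᵐ t ∂(volume.restrict (Set.Ioo (0:ℝ) 1)),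
      HasDerivAt φ (g t) t ∧ |g t - M| ≤ C') :
    |φ 1 - φ 0 - M| ≤ C' := by
  set ν := volume.restrict (Set.Ioo (0:ℝ) 1) with hν
  have hφc : Continuous φ := hφ.continuous
  have hint : ∀ a b : ℝ, IntervalIntegrable φ volume a b := fun a b =>
    hφc.intervalIntegrable a b
  set h : ℕ → ℝ := fun k => (1:ℝ)/(k+1) with hh
  have hhpos : ∀ k, 0 < h k := fun k => by positivity
  have hh0 : Tendsto h atTop (𝓝 0) := tendsto_one_div_add_atTop_nhds_zero_nat
  set F : ℕ → ℝ → ℝ := fun k t => (φ (t + h k) - φ t) / h k with hF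
  -- pointwise convergence at points of differentiability
  have hptwise : ∀ t : ℝ, HasDerivAt φ (g t) t → Tendsto (fun k => F k t) atTop (𝓝 (g t)) := by
    intro t ht
    have hslope := hasDerivAt_iff_tendsto_slope.1 ht
    have htt : Tendsto (fun k => t + h k) atTop (𝓝[≠] t) := by
      apply tendsto_nhdsWithin_of_tendsto_nhds_of_eventually_within
      · simpa using tendsto_const_nhds.add hh0
      · exact Eventually.of_forall fun k => by
          simp only [Set.mem_compl_iff, Set.mem_singleton_iff]
          nlinarith [hhpos k]
    have := hslope.comp htt
    convert this using 2 with k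
    simp [F, slope, div_eq_inv_mul]
  -- uniform bound
  have hbound : ∀ k t, |F k t| ≤ (K:ℝ) := by
    intro k t
    have := hφ.dist_le_mul (t + h k) t
    simp only [Real.dist_eq, add_sub_cancel_left] at this
    rw [abs_div]
    rw [abs_of_pos (hhpos k)]
    rw [div_le_iff₀ (hhpos k)]
    simpa [abs_of_pos (hhpos k)] using this
  -- integral of F k
  have hFk : ∀ k, ∫ t, F k t ∂ν =
      ((∫ s in (1:ℝ)..(1 + h k), φ s) - ∫ s in (0:ℝ)..(h k), φ s) / h k := by
    intro k
    have h1 : ∫ t, F k t ∂ν = ∫ t in (0:ℝ)..1, F k t := by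
      rw [intervalIntegral.integral_of_le (by norm_num : (0:ℝ) ≤ 1),
        ← MeasureTheory.integral_Ioc_eq_integral_Ioo]
    rw [h1]
    have h2 : ∫ t in (0:ℝ)..1, F k t
        = ((∫ t in (0:ℝ)..1, φ (t + h k)) - ∫ t in (0:ℝ)..1, φ t) / h k := by
      simp only [F, div_eq_inv_mul]
      have i1 : IntervalIntegrable (fun x => φ (x + h k)) volume 0 1 :=
        Continuous.intervalIntegrable (by continuity) 0 1
      rw [intervalIntegral.integral_const_mul,
        ← intervalIntegral.integral_sub i1 (hint 0 1)]
    rw [h2, intervalIntegral.integral_comp_add_right]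
    have h3 : ∫ t in (0:ℝ)+(h k)..(1:ℝ)+(h k), φ t
        = (∫ t in (0:ℝ)+(h k)..1, φ t) + ∫ t in (1:ℝ)..1+(h k), φ t :=
      (intervalIntegral.integral_add_adjacent_intervals (hint _ _) (hint _ _)).symm
    have h4 : ∫ t in (0:ℝ)..1, φ t
        = (∫ t in (0:ℝ)..(h k), φ t) + ∫ t in (h k)..1, φ t :=
      (intervalIntegral.integral_add_adjacent_intervals (hint _ _) (hint _ _)).symm
    rw [h3, h4]
    ring_nf
  haveI : IsFiniteMeasure ν := by
    constructor
    rw [hν, Measure.restrict_apply_univ, Real.volume_Ioo]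
    simp
  have hνuniv : ν Set.univ = 1 := by
    rw [hν, Measure.restrict_apply_univ, Real.volume_Ioo]; norm_num
  -- auxiliary: tendsto to punctured neighborhoods
  have hpunct : ∀ c : ℝ, Tendsto (fun k => c + h k) atTop (𝓝[≠] c) := by
    intro c
    apply tendsto_nhdsWithin_of_tendsto_nhds_of_eventually_within
    · simpa using tendsto_const_nhds.add hh0
    · exact Eventually.of_forall fun k => by
        simp only [Set.mem_compl_iff, Set.mem_singleton_iff]
        nlinarith [hhpos k]
  -- limit of the integrals of F k
  have hlim : Tendsto (fun k => ∫ t, F k t ∂ν) atTop (𝓝 (φ 1 - φ 0)) := by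
    have hd1 : HasDerivAt (fun u => ∫ s in (1:ℝ)..u, φ s) (φ 1) 1 :=
      (hφc.integral_hasStrictDerivAt 1 1).hasDerivAt
    have hd0 : HasDerivAt (fun u => ∫ s in (0:ℝ)..u, φ s) (φ 0) 0 :=
      (hφc.integral_hasStrictDerivAt 0 0).hasDerivAt
    have hs1 := (hasDerivAt_iff_tendsto_slope.1 hd1).comp (hpunct 1)
    have hs0 := (hasDerivAt_iff_tendsto_slope.1 hd0).comp (hpunct 0)
    have e1 : ∀ k, (slope (fun u => ∫ s in (1:ℝ)..u, φ s) 1 ∘ fun k => 1 + h k) k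
        = (∫ s in (1:ℝ)..(1 + h k), φ s) / h k := by
      intro k
      simp [slope, intervalIntegral.integral_same, div_eq_inv_mul]
    have e0 : ∀ k, (slope (fun u => ∫ s in (0:ℝ)..u, φ s) 0 ∘ fun k => 0 + h k) k
        = (∫ s in (0:ℝ)..(h k), φ s) / h k := by
      intro k
      simp [slope, intervalIntegral.integral_same, div_eq_inv_mul]
    have conv : Tendsto (fun k => (∫ s in (1:ℝ)..(1 + h k), φ s) / h k
          - (∫ s in (0:ℝ)..(h k), φ s) / h k) atTop (𝓝 (φ 1 - φ 0)) := by
      refine (hs1.sub hs0).congr fun k => ?_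
      rw [e1 k, e0 k]
    refine conv.congr fun k => ?_
    rw [hFk k]
    ring
  -- a.e. convergence to g and dominated convergence
  have haeconv : ∀ᵐ t ∂ν, Tendsto (fun k => F k t) atTop (𝓝 (g t)) := by
    filter_upwards [hae] with t ht using hptwise t ht.1
  have hFmeas : ∀ k : ℕ, AEStronglyMeasurable (F k) ν := fun k =>
    Continuous.aestronglyMeasurable (by fun_prop)
  have hgmeas : AEStronglyMeasurable g ν :=
    aestronglyMeasurable_of_tendsto_ae atTop hFmeas haeconv
  have hIF : Tendsto (fun k => ∫ t, F k t ∂ν) atTop (𝓝 (∫ t, g t ∂ν)) :=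
    tendsto_integral_of_dominated_convergence (fun _ => (K:ℝ)) hFmeas
      (integrable_const _)
      (fun k => Eventually.of_forall fun t => by
        simpa [Real.norm_eq_abs] using hbound k t) haeconv
  have hkey : φ 1 - φ 0 = ∫ t, g t ∂ν := tendsto_nhds_unique hlim hIF
  have hg_int : Integrable g ν := by
    refine Integrable.mono' (integrable_const (|M| + C')) hgmeas ?_
    filter_upwards [hae] with t ht
    have := ht.2
    rw [Real.norm_eq_abs]
    have := abs_sub_abs_le_abs_sub (g t) M
    linarith [abs_sub_abs_le_abs_sub (g t) M, ht.2]
  rw [hkey]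
  have hM : ∫ _ : ℝ, M ∂ν = M := by
    rw [MeasureTheory.integral_const, Measure.real, hνuniv]; simp
  rw [← hM, ← integral_sub hg_int (integrable_const M)]
  calc |∫ t, (g t - M) ∂ν| ≤ ∫ t, |g t - M| ∂ν := by
        simpa [Real.norm_eq_abs] using
          MeasureTheory.norm_integral_le_integral_norm (μ := ν) (f := fun t => g t - M)
    _ ≤ ∫ _ : ℝ, C' ∂ν := by
        refine integral_mono_ae ((hg_int.sub (integrable_const M)).abs)
          (integrable_const C') ?_
        filter_upwards [hae] with t ht using ht.2
    _ = C' := by rw [MeasureTheory.integral_const, Measure.real, hνuniv]; simp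


lemma fubini_aux {n : ℕ} {N : Set (EuclideanSpace ℝ (Fin n))} (hNm : MeasurableSet N)
    (hN : volume N = 0) :
    ∀ᵐ p : EuclideanSpace ℝ (Fin n) × EuclideanSpace ℝ (Fin n)
      ∂((volume : Measure (EuclideanSpace ℝ (Fin n))).prod volume),
      ∀ᵐ t ∂(volume.restrict (Set.Ioo (0:ℝ) 1)), p.1 + t • (p.2 - p.1) ∉ N := by
  let E := EuclideanSpace ℝ (Fin n)
  set μ : Measure E := volume with hμ
  set ν : Measure ℝ := volume.restrict (Set.Ioo (0:ℝ) 1) with hνdef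
  have hcont : Continuous fun q : ℝ × (E × E) => q.2.1 + q.1 • (q.2.2 - q.2.1) := by
    fun_prop
  set W : Set (ℝ × (E × E)) := (fun q : ℝ × (E × E) => q.2.1 + q.1 • (q.2.2 - q.2.1)) ⁻¹' N
    with hWdef
  have hWm : MeasurableSet W := hcont.measurable hNm
  have hW0 : (ν.prod (μ.prod μ)) W = 0 := by
    rw [Measure.prod_apply hWm]
    have : ∀ᵐ t ∂ν, (μ.prod μ) (Prod.mk t ⁻¹' W) = 0 := by
      filter_upwards [ae_restrict_mem measurableSet_Ioo] with t ht
      have hsl : MeasurableSet (Prod.mk t ⁻¹' W) := hWm.preimage (measurable_prodMk_left)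
      rw [Measure.prod_apply hsl]
      have : ∀ a : E, μ (Prod.mk a ⁻¹' (Prod.mk t ⁻¹' W)) = 0 := by
        intro a
        have key : ∀ b : E, a + t • (b - a) = t • b + (a - t • a) := fun b => by module
        have hset : Prod.mk a ⁻¹' (Prod.mk t ⁻¹' W)
            = (t • · : E → E) ⁻¹' ((· + (a - t • a)) ⁻¹' N) := by
          ext b
          simp only [hWdef, Set.mem_preimage, key b]
        rw [hset, Measure.addHaar_preimage_smul μ (ne_of_gt ht.1),
          measure_preimage_add_right μ _ N, hN, mul_zero]
      simp only [this, lintegral_zero]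
    calc ∫⁻ t, (μ.prod μ) (Prod.mk t ⁻¹' W) ∂ν = ∫⁻ _, 0 ∂ν := lintegral_congr_ae this
      _ = 0 := lintegral_zero
  -- swap
  set W' : Set ((E × E) × ℝ) := (fun q : (E × E) × ℝ => q.1.1 + q.2 • (q.1.2 - q.1.1)) ⁻¹' N
    with hW'def
  have hW'm : MeasurableSet W' := by
    have : Continuous fun q : (E × E) × ℝ => q.1.1 + q.2 • (q.1.2 - q.1.1) := by fun_prop
    exact this.measurable hNm
  have hW'0 : ((μ.prod μ).prod ν) W' = 0 := by
    have hswap : (μ.prod μ).prod ν = Measure.map Prod.swap (ν.prod (μ.prod μ)) :=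
      (Measure.prod_swap).symm
    rw [hswap, Measure.map_apply measurable_swap hW'm]
    have : Prod.swap ⁻¹' W' = W := by
      ext q; rfl
    rw [this, hW0]
  have := Measure.measure_ae_null_of_prod_null hW'0
  filter_upwards [this] with p hp
  change ν (Prod.mk p ⁻¹' W') = 0 at hp
  rw [show Prod.mk p ⁻¹' W' = {t : ℝ | p.1 + t • (p.2 - p.1) ∈ N} from rfl] at hp
  rw [ae_iff]
  convert hp using 2
  ext t
  simp


set_option maxHeartbeats 1000000 in
/-- Hölder continuity of the gradient on the differentiability set
extends differentiability to the whole open set. -/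
theorem stmt_2 {n : ℕ} (Γ U : Set (EuclideanSpace ℝ (Fin n)))
    (hΓ : IsOpen Γ) (hU : IsOpen U) (hΓU : Γ ⊆ U)
    (G : EuclideanSpace ℝ (Fin n) → ℝ)
    (hLip : ∀ x ∈ U, ∃ K : NNReal, ∃ t ∈ nhds x, LipschitzOnWith K G t)
    (c α η : ℝ) (hc : 0 < c) (hα : 0 < α) (hη : 0 < η)
    (hHolder : ∀ u v : EuclideanSpace ℝ (Fin n),
      DifferentiableAt ℝ G u → DifferentiableAt ℝ G v → u ∈ Γ → v ∈ Γ →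
      ‖u - v‖ ≤ η → ‖gradient G u - gradient G v‖ ≤ c * ‖u - v‖ ^ α) :
    ∀ x ∈ Γ, DifferentiableAt ℝ G x := by
  intro x hx
  obtain ⟨K, t, ht, hK⟩ := hLip x (hΓU hx)
  have htΓ : t ∩ Γ ∈ nhds x := Filter.inter_mem ht (hΓ.mem_nhds hx)
  obtain ⟨ρ₀, hρ₀, hball₀⟩ := Metric.mem_nhds_iff.1 htΓ
  set ρ := min ρ₀ (η/2) with hρdef
  have hρ : 0 < ρ := lt_min hρ₀ (by linarith)
  have hρη : ρ ≤ η/2 := min_le_right _ _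
  have hballt : Metric.ball x ρ ⊆ t := fun z hz =>
    (hball₀ (Metric.ball_subset_ball (min_le_left _ _) hz)).1
  have hballΓ : Metric.ball x ρ ⊆ Γ := fun z hz =>
    (hball₀ (Metric.ball_subset_ball (min_le_left _ _) hz)).2
  have hKball : LipschitzOnWith K G (Metric.ball x ρ) := hK.mono hballt
  obtain ⟨Gt, hGtLip, hGtEq⟩ := hKball.extend_real
  -- transfer facts
  have hEqAt : ∀ z ∈ Metric.ball x ρ, G =ᶠ[𝓝 z] Gt := by
    intro z hz
    filter_upwards [Metric.isOpen_ball.mem_nhds hz] with w hw using hGtEq hw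
  have hdiff_iff : ∀ z ∈ Metric.ball x ρ,
      (DifferentiableAt ℝ G z ↔ DifferentiableAt ℝ Gt z) := fun z hz =>
    (hEqAt z hz).differentiableAt_iff
  have hgrad_eq : ∀ z ∈ Metric.ball x ρ, gradient G z = gradient Gt z := by
    intro z hz
    unfold gradient
    rw [(hEqAt z hz).fderiv_eq]
  set Sd : Set (EuclideanSpace ℝ (Fin n)) := {z | DifferentiableAt ℝ Gt z} with hSddef
  have hSdm : MeasurableSet Sd := measurableSet_of_differentiableAt ℝ Gt
  have hSdnull : volume Sdᶜ = 0 := by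
    have h := hGtLip.ae_differentiableAt (μ := volume)
    rw [ae_iff] at h
    exact h
  -- Hölder estimate for Gt
  have hHold' : ∀ u v : EuclideanSpace ℝ (Fin n), u ∈ Sd → v ∈ Sd →
      u ∈ Metric.ball x ρ → v ∈ Metric.ball x ρ →
      ‖gradient Gt u - gradient Gt v‖ ≤ c * ‖u - v‖ ^ α := by
    intro u v hu hv hub hvb
    have huv : ‖u - v‖ ≤ η := by
      have h1 : dist u x < ρ := hub
      have h2 : dist v x < ρ := hvb
      have : dist u v ≤ dist u x + dist x v := dist_triangle u x v
      rw [dist_comm x v] at this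
      rw [← dist_eq_norm]
      linarith
    rw [← hgrad_eq u hub, ← hgrad_eq v hvb]
    exact hHolder u v ((hdiff_iff u hub).2 hu) ((hdiff_iff v hvb).2 hv)
      (hballΓ hub) (hballΓ hvb) huv
  -- choose approximating sequence
  have hexists : ∀ k : ℕ, ∃ z, z ∈ Sd ∧ z ∈ Metric.ball x (ρ/(k+1)) := by
    intro k
    have hpos : 0 < volume (Metric.ball x (ρ/(k+1))) :=
      Metric.measure_ball_pos volume x (by positivity)
    have : (Metric.ball x (ρ/(k+1)) ∩ Sd).Nonempty := by
      rw [Set.inter_comm]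
      by_contra h
      rw [Set.not_nonempty_iff_eq_empty] at h
      have hsub : Metric.ball x (ρ/(k+1)) ⊆ Sdᶜ := by
        intro z hz
        by_contra hz'
        exact absurd (Set.eq_empty_iff_forall_notMem.1 h z ⟨not_not.1 hz', hz⟩) (fun a => a) 
      exact absurd (le_antisymm (le_trans (measure_mono hsub) hSdnull.le) (zero_le)) hpos.ne'
    obtain ⟨z, hz1, hz2⟩ := this
    exact ⟨z, hz2, hz1⟩
  choose u hu1 hu2 using hexists
  have hudist : ∀ k : ℕ, ‖u k - x‖ < ρ/(k+1) := fun k => by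
    have := hu2 k; rwa [Metric.mem_ball, dist_eq_norm] at this
  have hux : Tendsto u atTop (𝓝 x) := by
    rw [tendsto_iff_norm_sub_tendsto_zero]
    have hb : Tendsto (fun k : ℕ => ρ/(k+1)) atTop (𝓝 0) := by
      simpa [div_eq_mul_inv] using (tendsto_one_div_add_atTop_nhds_zero_nat).const_mul ρ
    exact squeeze_zero (fun k => norm_nonneg _) (fun k => (hudist k).le)
      (by simpa using hb)
  -- bound sequence tends to 0
  have hbtend : Tendsto (fun N : ℕ => c * (2*(ρ/(N+1))) ^ α) atTop (𝓝 0) := by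
    have h1 : Tendsto (fun N : ℕ => 2*(ρ/(N+1))) atTop (𝓝 0) := by
      simpa [div_eq_mul_inv] using ((tendsto_one_div_add_atTop_nhds_zero_nat).const_mul ρ).const_mul 2
    have h2 : ContinuousAt (fun s : ℝ => s ^ α) 0 :=
      Real.continuousAt_rpow_const 0 α (Or.inr hα.le)
    have h3 : Tendsto (fun N : ℕ => (2*(ρ/(N+1))) ^ α) atTop (𝓝 ((0:ℝ) ^ α)) :=
      (h2.tendsto.comp h1)
    rw [Real.zero_rpow hα.ne'] at h3
    simpa using h3.const_mul c
  -- Cauchy sequence of gradients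
  have hcauchy : CauchySeq (fun k => gradient Gt (u k)) := by
    refine cauchySeq_of_le_tendsto_0 (fun N => c * (2*(ρ/(N+1:ℝ))) ^ α) ?_ hbtend
    intro m k N hm hk
    rw [dist_eq_norm]
    calc ‖gradient Gt (u m) - gradient Gt (u k)‖ ≤ c * ‖u m - u k‖ ^ α :=
          hHold' _ _ (hu1 m) (hu1 k)
            (Metric.ball_subset_ball (div_le_self hρ.le (by push_cast; linarith) : ρ/(m+1) ≤ ρ) (hu2 m))
            (Metric.ball_subset_ball (div_le_self hρ.le (by push_cast; linarith) : ρ/(k+1) ≤ ρ) (hu2 k))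
      _ ≤ c * (2*(ρ/(N+1))) ^ α := by
          apply mul_le_mul_of_nonneg_left _ hc.le
          apply Real.rpow_le_rpow (norm_nonneg _) _ hα.le
          have h1 : ‖u m - u k‖ ≤ ‖u m - x‖ + ‖u k - x‖ := by
            have := norm_sub_le (u m - x) (u k - x)
            simpa [sub_sub_sub_cancel_right] using this
          have hm' : (N:ℝ)+1 ≤ (m:ℝ)+1 := by
            have := (Nat.cast_le (α := ℝ)).2 hm; linarith
          have hk' : (N:ℝ)+1 ≤ (k:ℝ)+1 := by
            have := (Nat.cast_le (α := ℝ)).2 hk; linarith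
          have h2 : ρ/(m+1) ≤ ρ/(N+1) :=
            div_le_div_of_nonneg_left hρ.le (by positivity) hm'
          have h3 : ρ/(k+1) ≤ ρ/(N+1) :=
            div_le_div_of_nonneg_left hρ.le (by positivity) hk'
          have h4 := hudist m
          have h5 := hudist k
          linarith
  obtain ⟨L, hL⟩ := cauchySeq_tendsto_of_complete hcauchy
  -- inner product representation of the differential
  have hfd : ∀ z : EuclideanSpace ℝ (Fin n), DifferentiableAt ℝ Gt z →
      ∀ w, fderiv ℝ Gt z w = (inner ℝ (gradient Gt z) w : ℝ) := by
    intro z hz w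
    have h := hz.hasGradientAt
    rw [hasGradientAt_iff_hasFDerivAt] at h
    rw [h.fderiv]
    simp [InnerProductSpace.toDual_apply_apply]
  -- property (P): gradients near x are close to L
  have hP : ∀ z, z ∈ Sd → z ∈ Metric.ball x ρ →
      ‖gradient Gt z - L‖ ≤ c * ‖z - x‖ ^ α := by
    intro z hz1 hz2
    have t1 : Tendsto (fun k => ‖gradient Gt z - gradient Gt (u k)‖) atTop
        (𝓝 ‖gradient Gt z - L‖) := (tendsto_const_nhds.sub hL).norm
    have t2 : Tendsto (fun k => c * ‖z - u k‖ ^ α) atTop (𝓝 (c * ‖z - x‖ ^ α)) := by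
      have hn : Tendsto (fun k => ‖z - u k‖) atTop (𝓝 ‖z - x‖) :=
        (tendsto_const_nhds.sub hux).norm
      have hc2 : ContinuousAt (fun s : ℝ => s ^ α) ‖z - x‖ :=
        Real.continuousAt_rpow_const _ α (Or.inr hα.le)
      exact (hc2.tendsto.comp hn).const_mul c
    refine le_of_tendsto_of_tendsto' t1 t2 fun k => ?_
    exact hHold' z (u k) hz1 (hu1 k) hz2
      (Metric.ball_subset_ball (div_le_self hρ.le (by push_cast; linarith)) (hu2 k))
  -- it suffices to show HasGradientAt Gt L x
  suffices hGrad : HasGradientAt Gt L x by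
    have hd : DifferentiableAt ℝ Gt x := hGrad.differentiableAt
    exact (hdiff_iff x (Metric.mem_ball_self hρ)).2 hd
  rw [hasGradientAt_iff_isLittleO, Asymptotics.isLittleO_iff]
  intro ε hε
  -- choose the radius r
  obtain ⟨N, hN⟩ := (((hbtend.eventually (gt_mem_nhds hε)).and (eventually_ge_atTop 1))).exists
  set r := ρ/(N+1) with hrdef
  have hr : 0 < r := by positivity
  have hNge : (1:ℝ) ≤ N := by exact_mod_cast hN.2
  have hrρ : 2*r ≤ ρ := by
    have h1 : ρ/((N:ℝ)+1) ≤ ρ/2 :=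
      div_le_div_of_nonneg_left hρ.le two_pos (by linarith)
    rw [hrdef]
    linarith
  have hrε : c * (2*r)^α ≤ ε := hN.1.le
  filter_upwards [Metric.ball_mem_nhds x hr] with y hy
  have hyx : ‖y - x‖ < r := by rwa [Metric.mem_ball, dist_eq_norm] at hy
  -- the δ-approximation bound
  have hδbound : ∀ δ : ℝ, 0 < δ → δ ≤ r →
      ‖Gt y - Gt x - (inner ℝ L (y - x) : ℝ)‖ ≤ ε * ‖y - x‖ + (2*ε + 2*(K:ℝ) + 2*‖L‖) * δ := by
    intro δ hδ hδr
    set ν := volume.restrict (Set.Ioo (0:ℝ) 1) with hνdef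
    have hfub := fubini_aux hSdm.compl hSdnull
    have hboxpos : 0 < (volume.prod volume) (Metric.ball x δ ×ˢ Metric.ball y δ) := by
      rw [Measure.prod_prod]
      exact ENNReal.mul_pos (Metric.measure_ball_pos volume x hδ).ne'
        (Metric.measure_ball_pos volume y hδ).ne'
    obtain ⟨p, hpbox, hpae⟩ : ∃ p ∈ Metric.ball x δ ×ˢ Metric.ball y δ,
        ∀ᵐ s ∂ν, p.1 + s • (p.2 - p.1) ∉ Sdᶜ := by
      by_contra hcon
      push_neg at hcon
      have hsub : (Metric.ball x δ ×ˢ Metric.ball y δ) ⊆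
          {p : EuclideanSpace ℝ (Fin n) × EuclideanSpace ℝ (Fin n) |
            ¬ (∀ᵐ s ∂ν, p.1 + s • (p.2 - p.1) ∉ Sdᶜ)} := fun p hp => hcon p hp
      rw [ae_iff] at hfub
      exact absurd (le_antisymm (le_trans (measure_mono hsub) hfub.le) (zero_le))
        hboxpos.ne'
    set a := p.1 with hadef
    set b := p.2 with hbdef
    have ha : ‖a - x‖ < δ := by
      have := hpbox.1; rwa [Metric.mem_ball, dist_eq_norm] at this
    have hb : ‖b - y‖ < δ := by
      have := hpbox.2; rwa [Metric.mem_ball, dist_eq_norm] at this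
    have hbx : ‖b - x‖ < r + δ := by
      calc ‖b - x‖ ≤ ‖b - y‖ + ‖y - x‖ := by
            have := norm_add_le (b - y) (y - x); simpa [sub_add_sub_cancel] using this
        _ < δ + r := by linarith
        _ = r + δ := by ring
    set v := b - a with hvdef
    -- geometry of the segment
    have hseg : ∀ s : ℝ, s ∈ Set.Ioo (0:ℝ) 1 →
        ‖(a + s • v) - x‖ ≤ 2*r ∧ (a + s • v) ∈ Metric.ball x ρ := by
      intro s hs
      have hdecomp : (a + s • v) - x = (1-s) • (a - x) + s • (b - x) := by
        rw [hvdef]; module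
      have hbound : ‖(a + s • v) - x‖ ≤ (1-s) * ‖a - x‖ + s * ‖b - x‖ := by
        rw [hdecomp]
        calc ‖(1-s) • (a - x) + s • (b - x)‖ ≤ ‖(1-s) • (a-x)‖ + ‖s • (b-x)‖ := norm_add_le _ _
          _ = (1-s) * ‖a - x‖ + s * ‖b - x‖ := by
              rw [norm_smul, norm_smul, Real.norm_eq_abs, Real.norm_eq_abs,
                abs_of_nonneg (by linarith [hs.2] : (0:ℝ) ≤ 1 - s),
                abs_of_nonneg hs.1.le]
      have e1 : (1-s) * ‖a - x‖ < (1-s) * δ :=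
        mul_lt_mul_of_pos_left ha (by linarith [hs.2])
      have e2 : s * ‖b - x‖ ≤ s * (r + δ) :=
        mul_le_mul_of_nonneg_left hbx.le hs.1.le
      have e3 : s * r ≤ 1 * r := mul_le_mul_of_nonneg_right hs.2.le hr.le
      have e4 : s * δ ≤ 1 * δ := mul_le_mul_of_nonneg_right hs.2.le hδ.le
      constructor
      · nlinarith [hs.1, hs.2]
      · rw [Metric.mem_ball, dist_eq_norm]
        nlinarith [hs.1, hs.2]
    -- the function along the segment
    set φ : ℝ → ℝ := fun s => Gt (a + s • v) with hφdef
    have hlin : LipschitzWith ‖v‖₊ (fun s : ℝ => a + s • v) := by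
      apply LipschitzWith.of_dist_le_mul
      intro s s'
      rw [dist_eq_norm, dist_eq_norm]
      have hd2 : (a + s • v) - (a + s' • v) = (s - s') • v := by module
      rw [hd2, norm_smul, Real.norm_eq_abs, coe_nnnorm]
      exact le_of_eq (mul_comm _ _)
    have hφlip : LipschitzWith (K * ‖v‖₊) φ := hGtLip.comp hlin
    set g : ℝ → ℝ := fun s => (inner ℝ (gradient Gt (a + s • v)) v : ℝ) with hgdef
    set M : ℝ := (inner ℝ L v : ℝ) with hMdef
    set C' : ℝ := (c * (2*r)^α) * ‖v‖ with hC'def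
    have hC'0 : 0 ≤ C' := by
      apply mul_nonneg _ (norm_nonneg _)
      apply mul_nonneg hc.le (Real.rpow_nonneg (by linarith) _)
    have haeftc : ∀ᵐ s ∂ν, HasDerivAt φ (g s) s ∧ |g s - M| ≤ C' := by
      filter_upwards [hpae, ae_restrict_mem measurableSet_Ioo] with s hsS hsI
      have hz1 : (a + s • v) ∈ Sd := not_not.1 hsS
      have hzb := (hseg s hsI).2
      have hz2r := (hseg s hsI).1
      constructor
      · have hline : HasDerivAt (fun s : ℝ => a + s • v) v s := by
          simpa using ((hasDerivAt_id s).smul_const v).const_add a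
        have hD : HasFDerivAt Gt (fderiv ℝ Gt (a + s • v)) (a + s • v) :=
          hz1.hasFDerivAt
        have hcomp := hD.comp_hasDerivAt s hline
        have heq2 : fderiv ℝ Gt (a + s • v) v = g s := hfd _ hz1 v
        rw [heq2] at hcomp
        exact hcomp
      · have heq : g s - M = (inner ℝ (gradient Gt (a + s • v) - L) v : ℝ) := by
          rw [hgdef, hMdef]; rw [inner_sub_left]
        rw [heq]
        calc |(inner ℝ (gradient Gt (a + s • v) - L) v : ℝ)|
            ≤ ‖gradient Gt (a + s • v) - L‖ * ‖v‖ := abs_real_inner_le_norm _ _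
          _ ≤ (c * (2*r)^α) * ‖v‖ := by
              apply mul_le_mul_of_nonneg_right _ (norm_nonneg _)
              calc ‖gradient Gt (a + s • v) - L‖ ≤ c * ‖(a + s • v) - x‖ ^ α :=
                    hP _ hz1 hzb
                _ ≤ c * (2*r) ^ α := by
                    apply mul_le_mul_of_nonneg_left _ hc.le
                    exact Real.rpow_le_rpow (norm_nonneg _) hz2r hα.le
    have hftc := ftc_aux hφlip hC'0 haeftc
    have hφ1 : φ 1 = Gt b := by
      rw [hφdef]
      simp only
      congr 1
      rw [hvdef]
      module
    have hφ0 : φ 0 = Gt a := by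
      rw [hφdef]
      simp only
      congr 1
      module
    rw [hφ1, hφ0] at hftc
    -- assemble the estimate
    have hvnorm : ‖v‖ ≤ ‖y - x‖ + 2*δ := by
      have hd3 : v = (y - x) + (b - y) + (x - a) := by rw [hvdef]; module
      calc ‖v‖ ≤ ‖(y - x) + (b - y)‖ + ‖x - a‖ := by rw [hd3]; exact norm_add_le _ _
        _ ≤ ‖y - x‖ + ‖b - y‖ + ‖x - a‖ := by linarith [norm_add_le (y - x) (b - y)]
        _ ≤ ‖y - x‖ + 2*δ := by
            rw [norm_sub_rev x a]; linarith [hb.le, ha.le]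
    have hA : |Gt b - Gt a - M| ≤ ε * (‖y - x‖ + 2*δ) := by
      calc |Gt b - Gt a - M| ≤ C' := hftc
        _ = (c * (2*r)^α) * ‖v‖ := hC'def
        _ ≤ ε * ‖v‖ := mul_le_mul_of_nonneg_right hrε (norm_nonneg _)
        _ ≤ ε * (‖y - x‖ + 2*δ) := mul_le_mul_of_nonneg_left hvnorm hε.le
    have hGyb : |Gt y - Gt b| ≤ (K:ℝ) * δ := by
      have h5 := hGtLip.dist_le_mul y b
      rw [Real.dist_eq, dist_eq_norm] at h5
      have h2 : ‖y - b‖ ≤ δ := by rw [norm_sub_rev]; exact hb.le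
      calc |Gt y - Gt b| ≤ (K:ℝ) * ‖y - b‖ := h5
        _ ≤ (K:ℝ) * δ := mul_le_mul_of_nonneg_left h2 K.2
    have hGax : |Gt a - Gt x| ≤ (K:ℝ) * δ := by
      have h5 := hGtLip.dist_le_mul a x
      rw [Real.dist_eq, dist_eq_norm] at h5
      calc |Gt a - Gt x| ≤ (K:ℝ) * ‖a - x‖ := h5
        _ ≤ (K:ℝ) * δ := mul_le_mul_of_nonneg_left ha.le K.2
    have hLlin : |M - (inner ℝ L (y - x) : ℝ)| ≤ ‖L‖ * (2*δ) := by
      have heq : M - (inner ℝ L (y - x) : ℝ) = (inner ℝ L (v - (y - x)) : ℝ) := by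
        rw [hMdef, ← inner_sub_right]
      rw [heq]
      have hd4 : v - (y - x) = (b - y) - (a - x) := by rw [hvdef]; module
      calc |(inner ℝ L (v - (y - x)) : ℝ)| ≤ ‖L‖ * ‖v - (y - x)‖ := abs_real_inner_le_norm _ _
        _ ≤ ‖L‖ * (2*δ) := by
            apply mul_le_mul_of_nonneg_left _ (norm_nonneg _)
            rw [hd4]
            calc ‖(b - y) - (a - x)‖ ≤ ‖b - y‖ + ‖a - x‖ := norm_sub_le _ _
              _ ≤ 2*δ := by linarith [hb.le, ha.le]
    have hsplit : Gt y - Gt x - (inner ℝ L (y - x) : ℝ) =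
        (Gt b - Gt a - M) + (Gt y - Gt b) + (Gt a - Gt x) + (M - (inner ℝ L (y - x) : ℝ)) := by
      ring
    rw [Real.norm_eq_abs, hsplit]
    calc |(Gt b - Gt a - M) + (Gt y - Gt b) + (Gt a - Gt x) + (M - (inner ℝ L (y - x) : ℝ))|
        ≤ |(Gt b - Gt a - M) + (Gt y - Gt b) + (Gt a - Gt x)| + |M - (inner ℝ L (y - x) : ℝ)| :=
          abs_add_le _ _
      _ ≤ |(Gt b - Gt a - M) + (Gt y - Gt b)| + |Gt a - Gt x| + |M - (inner ℝ L (y - x) : ℝ)| := by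
          linarith [abs_add_le ((Gt b - Gt a - M) + (Gt y - Gt b)) (Gt a - Gt x)]
      _ ≤ |Gt b - Gt a - M| + |Gt y - Gt b| + |Gt a - Gt x| + |M - (inner ℝ L (y - x) : ℝ)| := by
          linarith [abs_add_le (Gt b - Gt a - M) (Gt y - Gt b)]
      _ ≤ ε * (‖y - x‖ + 2*δ) + (K:ℝ)*δ + (K:ℝ)*δ + ‖L‖*(2*δ) := by
          linarith
      _ ≤ ε * ‖y - x‖ + (2*ε + 2*(K:ℝ) + 2*‖L‖) * δ := by nlinarith [hδ.le]
  -- let δ → 0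
  have hfinal : ∀ ε' : ℝ, 0 < ε' →
      ‖Gt y - Gt x - (inner ℝ L (y - x) : ℝ)‖ ≤ ε * ‖y - x‖ + ε' := by
    intro ε' hε'
    have hC0 : (0:ℝ) ≤ 2*ε + 2*(K:ℝ) + 2*‖L‖ := by
      have := hε.le; have := NNReal.coe_nonneg K; have := norm_nonneg L; linarith
    have hC0p : (0:ℝ) < 2*ε + 2*(K:ℝ) + 2*‖L‖ + 1 := by linarith
    obtain ⟨δ, hδpos, hδler, hC0δ⟩ : ∃ δ : ℝ, 0 < δ ∧ δ ≤ r ∧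
        (2*ε + 2*(K:ℝ) + 2*‖L‖) * δ ≤ ε' := by
      refine ⟨min r (ε' / (2*ε + 2*(K:ℝ) + 2*‖L‖ + 1)), lt_min hr (by positivity),
        min_le_left _ _, ?_⟩
      have hδle : min r (ε' / (2*ε + 2*(K:ℝ) + 2*‖L‖ + 1))
          ≤ ε' / (2*ε + 2*(K:ℝ) + 2*‖L‖ + 1) := min_le_right _ _
      have h1 := mul_le_mul_of_nonneg_left hδle hC0
      have h2 : (2*ε + 2*(K:ℝ) + 2*‖L‖) * (ε' / (2*ε + 2*(K:ℝ) + 2*‖L‖ + 1)) ≤ ε' := by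
        rw [mul_div_assoc', div_le_iff₀ hC0p]
        nlinarith
      linarith
    have hmain := hδbound δ hδpos hδler
    linarith
  exact le_of_forall_pos_le_add hfinal
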